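/- Let $1 \le t \le k$, let $x \in \mathbb{F}_2^n$ have weight $2t$, and for each partition $\alpha = (x_1, x_2)$ of the support of $x$ into two sets of size $t$, and each unit vector $y = (y_a)_{a \in S(n,k)}$ (i.e., $\sum_a y_a^2 = 1$), set $s_\alpha(y) = \sum_{w} y_{x_1 \cup w}\, y_{x_2 \cup w}$, the sum over all $(k-t)$-subsets $w$ of the complement of the support of $x$. Then $\sum_{x \in S(n,2t)} \sum_{\alpha \in P(x)} s_\alpha(y)^2 \le \binom{k}{t}^2$. -/

import Mathlib

open Finset

/-- The Hamming sphere of radius `k` in `𝔽₂ⁿ`. -/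
def sphere (n k : ℕ) : Finset (Fin n → ZMod 2) :=
  Finset.univ.filter (fun x => hammingNorm x = k)

/-- The set `P(x)` of ordered partitions of (the support of) `x` into two weight-`t` parts:
pairs `(x₁, x₂)` with `x₁ + x₂ = x` and each of weight `t`. -/
def parts (n t : ℕ) (x : Fin n → ZMod 2) :
    Finset ((Fin n → ZMod 2) × (Fin n → ZMod 2)) :=
  (Finset.univ ×ˢ Finset.univ).filter
    (fun p => p.1 + p.2 = x ∧ hammingNorm p.1 = t ∧ hammingNorm p.2 = t)

/-- The `(k-t)`-subsets `w` of the complement of the support of `x`. -/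
def outside (n k t : ℕ) (x : Fin n → ZMod 2) : Finset (Fin n → ZMod 2) :=
  Finset.univ.filter (fun w => hammingNorm w = k - t ∧ ∀ i, x i = 0 ∨ w i = 0)

namespace StmtAux
variable {n : ℕ}

def supp (z : Fin n → ZMod 2) : Finset (Fin n) := Finset.univ.filter (fun i => z i ≠ 0)

lemma card_supp (z : Fin n → ZMod 2) : (supp z).card = hammingNorm z := rfl

lemma eq_of_supp_eq {u v : Fin n → ZMod 2} (h : supp u = supp v) : u = v := by
  funext i
  have h2 := Finset.ext_iff.mp h i
  simp only [supp, Finset.mem_filter, Finset.mem_univ, true_and] at h2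
  revert h2
  generalize u i = a; generalize v i = b
  revert a b; decide

lemma supp_add {u v : Fin n → ZMod 2} (h : ∀ i, u i = 0 ∨ v i = 0) :
    supp (u + v) = supp u ∪ supp v := by
  ext i
  simp only [supp, Finset.mem_filter, Finset.mem_univ, true_and, Finset.mem_union, Pi.add_apply]
  rcases h i with h | h <;> simp [h]

lemma disj_supp {u v : Fin n → ZMod 2} (h : ∀ i, u i = 0 ∨ v i = 0) :
    Disjoint (supp u) (supp v) := by
  rw [Finset.disjoint_left]
  intro i hu hv
  simp only [supp, Finset.mem_filter, Finset.mem_univ, true_and] at hu hv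
  rcases h i with h | h
  exacts [hu h, hv h]

lemma norm_add {u v : Fin n → ZMod 2} (h : ∀ i, u i = 0 ∨ v i = 0) :
    hammingNorm (u + v) = hammingNorm u + hammingNorm v := by
  rw [← card_supp, ← card_supp, ← card_supp, supp_add h,
    Finset.card_union_of_disjoint (disj_supp h)]

lemma disj_of_norm {u v : Fin n → ZMod 2}
    (h : hammingNorm (u + v) = hammingNorm u + hammingNorm v) :
    ∀ i, u i = 0 ∨ v i = 0 := by
  intro i
  by_contra hc
  push_neg at hc
  have hsub : supp (u + v) ⊆ supp u ∪ supp v := by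
    intro j hj
    simp only [supp, Finset.mem_filter, Finset.mem_univ, true_and, Finset.mem_union,
      Pi.add_apply] at hj ⊢
    by_contra hh
    push_neg at hh
    simp [hh.1, hh.2] at hj
  have hui := Finset.card_union_add_card_inter (supp u) (supp v)
  have hi : 0 < (supp u ∩ supp v).card :=
    Finset.card_pos.mpr ⟨i, by simp [supp, hc.1, hc.2]⟩
  have h2 : (supp (u + v)).card ≤ (supp u ∪ supp v).card := Finset.card_le_card hsub
  simp only [card_supp] at hui h2 hi ⊢
  omega

lemma add_add_cancel (u v : Fin n → ZMod 2) : u + (u + v) = v := by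
  rw [← add_assoc]
  have : u + u = 0 := by
    funext i
    exact (by decide : ∀ a : ZMod 2, a + a = 0) (u i)
  rw [this, zero_add]

end StmtAux

open StmtAux

theorem stmt_18 (n t k : ℕ) (ht : 1 ≤ t) (htk : t ≤ k)
    (y : (Fin n → ZMod 2) → ℝ) (hy : ∑ a ∈ sphere n k, (y a) ^ 2 = 1) :
    ∑ x ∈ sphere n (2 * t), ∑ p ∈ parts n t x,
        (∑ w ∈ outside n k t x, y (p.1 + w) * y (p.2 + w)) ^ 2 ≤
      ((k.choose t : ℝ)) ^ 2 := by
  classical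
  set S : Finset (Σ _ : Fin n → ZMod 2, ((Fin n → ZMod 2) × (Fin n → ZMod 2)) × (Fin n → ZMod 2) × (Fin n → ZMod 2)) :=
    (sphere n (2 * t)).sigma
      (fun x => (parts n t x) ×ˢ ((outside n k t x) ×ˢ (outside n k t x))) with hSdef
  set φ : (Σ _ : Fin n → ZMod 2, ((Fin n → ZMod 2) × (Fin n → ZMod 2)) × (Fin n → ZMod 2) × (Fin n → ZMod 2)) → (Fin n → ZMod 2) × (Fin n → ZMod 2) :=
    (fun q => (q.2.1.1 + q.2.2.1, q.2.1.2 + q.2.2.2)) with hφdef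
  -- facts about members of S
  have hmem : ∀ q ∈ S, q.2.1.1 + q.2.1.2 = q.1 ∧ hammingNorm q.2.1.1 = t ∧
      hammingNorm q.2.1.2 = t ∧ hammingNorm q.1 = 2 * t ∧
      (hammingNorm q.2.2.1 = k - t ∧ ∀ i, q.1 i = 0 ∨ q.2.2.1 i = 0) ∧
      (hammingNorm q.2.2.2 = k - t ∧ ∀ i, q.1 i = 0 ∨ q.2.2.2 i = 0) := by
    rintro ⟨x, p, w1, w2⟩ hq
    simp only [hSdef, Finset.mem_sigma, Finset.mem_product, sphere, parts, outside,
      Finset.mem_filter, Finset.mem_univ, true_and] at hq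
    exact ⟨hq.2.1.1, hq.2.1.2.1, hq.2.1.2.2, hq.1, hq.2.2.1, hq.2.2.2⟩
  -- disjointness facts
  have hdisj : ∀ q ∈ S, (∀ i, q.2.1.1 i = 0 ∨ q.2.1.2 i = 0) ∧
      (∀ i, q.2.1.1 i = 0 ∨ q.2.2.1 i = 0) ∧ (∀ i, q.2.1.2 i = 0 ∨ q.2.2.2 i = 0) := by
    intro q hq
    obtain ⟨hpx, hp1, hp2, hx, ⟨hw1, hw1d⟩, ⟨hw2, hw2d⟩⟩ := hmem q hq
    have hd12 : ∀ i, q.2.1.1 i = 0 ∨ q.2.1.2 i = 0 := by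
      apply disj_of_norm
      rw [hpx, hp1, hp2, hx]; ring
    refine ⟨hd12, ?_, ?_⟩
    · intro i
      by_cases h1 : q.2.1.1 i = 0
      · exact Or.inl h1
      · refine Or.inr ?_
        rcases hw1d i with h | h
        · exfalso
          rcases hd12 i with h2 | h2
          · exact h1 h2
          · rw [← hpx] at h
            simp only [Pi.add_apply, h2, add_zero] at h
            exact h1 h
        · exact h
    · intro i
      by_cases h1 : q.2.1.2 i = 0
      · exact Or.inl h1
      · refine Or.inr ?_
        rcases hw2d i with h | h
        · exfalso
          rcases hd12 i with h2 | h2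
          · rw [← hpx] at h
            simp only [Pi.add_apply, h2, zero_add] at h
            exact h1 h
          · exact h1 h2
        · exact h
  -- φ maps S into sphere × sphere
  have hmaps : ∀ q ∈ S, φ q ∈ (sphere n k) ×ˢ (sphere n k) := by
    intro q hq
    obtain ⟨hpx, hp1, hp2, hx, ⟨hw1, _⟩, ⟨hw2, _⟩⟩ := hmem q hq
    obtain ⟨_, hd1, hd2⟩ := hdisj q hq
    simp only [hφdef, Finset.mem_product, sphere, Finset.mem_filter, Finset.mem_univ, true_and]
    constructor
    · rw [norm_add hd1, hp1, hw1]; omega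
    · rw [norm_add hd2, hp2, hw2]; omega
  -- fiber card bound
  have hcard : ∀ ab ∈ (sphere n k) ×ˢ (sphere n k),
      ((S.filter (fun q => φ q = ab)).card : ℝ) ≤ (k.choose t : ℝ) ^ 2 := by
    rintro ⟨a, b⟩ hab
    simp only [Finset.mem_product, sphere, Finset.mem_filter, Finset.mem_univ, true_and] at hab
    have htarget : ((supp a).powersetCard t ×ˢ (supp b).powersetCard t).card
        = k.choose t * k.choose t := by
      rw [Finset.card_product, Finset.card_powersetCard, Finset.card_powersetCard,
        card_supp, card_supp, hab.1, hab.2]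
    have hle : (S.filter (fun q => φ q = (a, b))).card ≤
        ((supp a).powersetCard t ×ˢ (supp b).powersetCard t).card := by
      apply Finset.card_le_card_of_injOn (fun q => (supp q.2.1.1, supp q.2.1.2))
      · intro q hq
        rw [Finset.mem_coe, Finset.mem_filter] at hq
        obtain ⟨hqS, hqab⟩ := hq
        obtain ⟨hpx, hp1, hp2, hx, ⟨hw1, _⟩, ⟨hw2, _⟩⟩ := hmem q hqS
        obtain ⟨_, hd1, hd2⟩ := hdisj q hqS
        have ha : q.2.1.1 + q.2.2.1 = a := congrArg Prod.fst hqab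
        have hb : q.2.1.2 + q.2.2.2 = b := congrArg Prod.snd hqab
        simp only [Finset.mem_coe, Finset.mem_product, Finset.mem_powersetCard]
        refine ⟨⟨?_, by rw [card_supp, hp1]⟩, ⟨?_, by rw [card_supp, hp2]⟩⟩
        · rw [← ha, supp_add hd1]; exact Finset.subset_union_left
        · rw [← hb, supp_add hd2]; exact Finset.subset_union_left
      · rintro ⟨x, p, w1, w2⟩ hq ⟨x', p', w1', w2'⟩ hq' heq
        rw [Finset.mem_coe, Finset.mem_filter] at hq hq'
        obtain ⟨hqS, hqab⟩ := hq
        obtain ⟨hqS', hqab'⟩ := hq'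
        obtain ⟨hpx, _, _, _, _, _⟩ := hmem _ hqS
        obtain ⟨hpx', _, _, _, _, _⟩ := hmem _ hqS'
        simp only [Prod.mk.injEq] at heq
        have hp1 : p.1 = p'.1 := eq_of_supp_eq heq.1
        have hp2 : p.2 = p'.2 := eq_of_supp_eq heq.2
        have hpp : p = p' := Prod.ext hp1 hp2
        have hxx : x = x' := by
          simp only at hpx hpx'
          rw [← hpx, ← hpx', hpp]
        have ha : p.1 + w1 = a := congrArg Prod.fst hqab
        have ha' : p'.1 + w1' = a := congrArg Prod.fst hqab'
        have hb : p.2 + w2 = b := congrArg Prod.snd hqab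
        have hb' : p'.2 + w2' = b := congrArg Prod.snd hqab'
        have hw1 : w1 = w1' := by
          have e1 : w1 = p.1 + a := by rw [← ha, add_add_cancel]
          have e2 : w1' = p'.1 + a := by rw [← ha', add_add_cancel]
          rw [e1, e2, hp1]
        have hw2 : w2 = w2' := by
          have e1 : w2 = p.2 + b := by rw [← hb, add_add_cancel]
          have e2 : w2' = p'.2 + b := by rw [← hb', add_add_cancel]
          rw [e1, e2, hp2]
        subst hxx hpp hw1 hw2
        rfl
    calc ((S.filter (fun q => φ q = (a, b))).card : ℝ)
        ≤ (((supp a).powersetCard t ×ˢ (supp b).powersetCard t).card : ℝ) := by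
          exact_mod_cast hle
      _ = (k.choose t : ℝ) ^ 2 := by rw [htarget]; push_cast; ring
  -- Step 1: Cauchy-Schwarz + flatten
  have step2 : ∑ x ∈ sphere n (2 * t), ∑ p ∈ parts n t x,
        (∑ w ∈ outside n k t x, y (p.1 + w) * y (p.2 + w)) ^ 2 ≤
      ∑ q ∈ S, (y (φ q).1) ^ 2 * (y (φ q).2) ^ 2 := by
    have flat : ∑ q ∈ S, (y (φ q).1) ^ 2 * (y (φ q).2) ^ 2 =
        ∑ x ∈ sphere n (2 * t), ∑ p ∈ parts n t x, ∑ w1 ∈ outside n k t x,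
          ∑ w2 ∈ outside n k t x, (y (p.1 + w1)) ^ 2 * (y (p.2 + w2)) ^ 2 := by
      rw [hSdef, Finset.sum_sigma]
      refine Finset.sum_congr rfl fun x _ => ?_
      rw [Finset.sum_product]
      refine Finset.sum_congr rfl fun p _ => ?_
      rw [Finset.sum_product]
    rw [flat]
    refine Finset.sum_le_sum fun x _ => Finset.sum_le_sum fun p _ => ?_
    calc (∑ w ∈ outside n k t x, y (p.1 + w) * y (p.2 + w)) ^ 2
        ≤ (∑ w ∈ outside n k t x, (y (p.1 + w)) ^ 2) *
            ∑ w ∈ outside n k t x, (y (p.2 + w)) ^ 2 :=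
          Finset.sum_mul_sq_le_sq_mul_sq _ _ _
      _ = _ := by rw [Finset.sum_mul_sum]
  -- Step 2: fiberwise
  have step3 : ∑ q ∈ S, (y (φ q).1) ^ 2 * (y (φ q).2) ^ 2 ≤
      ∑ ab ∈ (sphere n k) ×ˢ (sphere n k),
        (k.choose t : ℝ) ^ 2 * ((y ab.1) ^ 2 * (y ab.2) ^ 2) := by
    rw [← Finset.sum_fiberwise_of_maps_to hmaps (fun q => (y (φ q).1) ^ 2 * (y (φ q).2) ^ 2)]
    refine Finset.sum_le_sum fun ab hab => ?_
    have : ∑ q ∈ S.filter (fun q => φ q = ab), (y (φ q).1) ^ 2 * (y (φ q).2) ^ 2 =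
        (S.filter (fun q => φ q = ab)).card • ((y ab.1) ^ 2 * (y ab.2) ^ 2) := by
      rw [Finset.sum_congr rfl (fun q hq => ?_), Finset.sum_const]
      rw [(Finset.mem_filter.mp hq).2]
    rw [this, nsmul_eq_mul]
    exact mul_le_mul_of_nonneg_right (hcard ab hab) (by positivity)
  calc _ ≤ ∑ ab ∈ (sphere n k) ×ˢ (sphere n k),
        (k.choose t : ℝ) ^ 2 * ((y ab.1) ^ 2 * (y ab.2) ^ 2) := le_trans step2 step3
    _ = (k.choose t : ℝ) ^ 2 := by
      rw [← Finset.mul_sum, Finset.sum_product]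
      have : ∑ a ∈ sphere n k, ∑ b ∈ sphere n k, (y a) ^ 2 * (y b) ^ 2 = 1 := by
        rw [← Finset.sum_mul_sum, hy, one_mul]
      rw [this, mul_one]
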